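/- The nondiscriminating SB σ^{PC} defined by σ^{PC}(G) = PCEP for all positions G is conservatively internally stable for the coalitional repeated game situation (γ^C, Γ): no path in PCEP is conservatively dominated at any position relative to σ^{PC}. -/

import Mathlib

open Set

section Setup

variable {N : Type*} [Fintype N] [DecidableEq N] {Z : N → Type*}

/-- A stage-game action profile. -/
abbrev Profile (Z : N → Type*) := ∀ i, Z i

/-- An infinite path of action profiles. -/
abbrev RPath (Z : N → Type*) := ℕ → Profile Z

/-- The profile played in period `τ` when coalition `C` deviates to `ζ` (off `C`, players follow `x τ`). -/
def devProfile (x : RPath Z) (C : Finset N) (τ : ℕ) (ζ : Profile Z) : Profile Z :=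
  fun i => if i ∈ C then ζ i else x τ i

/-- The spliced path `(x; ζ^C_τ; y)`: follow `x` before period `τ`, play the deviation profile at `τ`,
and follow `y` afterwards.  Periods are indexed from `0`. -/
def splice (x : RPath Z) (C : Finset N) (τ : ℕ) (ζ : Profile Z) (y : RPath Z) : RPath Z :=
  fun t => if t < τ then x t else if t = τ then devProfile x C τ ζ else y (t - τ - 1)

/-- Discounted payoff `U_i(x) = (1-δ) ∑ δ^t u_i(x_t)`. -/
noncomputable def disc (u : N → Profile Z → ℝ) (δ : ℝ) (i : N) (x : RPath Z) : ℝ :=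
  (1 - δ) * ∑' t : ℕ, δ ^ t * u i (x t)

/-- The coalitional enforceability operator `Ψ`. -/
def Psi (u : N → Profile Z → ℝ) (δ : ℝ) (Y : Set (RPath Z)) : Set (RPath Z) :=
  {x | ∀ C : Finset N, C.Nonempty → ∀ τ : ℕ, ∀ ζ : Profile Z,
    ∃ p : N → RPath Z, (∀ i, p i ∈ Y) ∧
      ∃ i ∈ C, disc u δ i x ≥ disc u δ i (splice x C τ ζ (p i))}

/-- A history (position) is a finite list of past action profiles. -/
abbrev Hist (Z : N → Type*) := List (Profile Z)

/-- The history reached after `n` periods of following plan `f` from history `h`. -/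
def planHist (f : Hist Z → Profile Z) (h : Hist Z) : ℕ → Hist Z
  | 0 => h
  | n + 1 => planHist f h n ++ [f (planHist f h n)]

/-- The continuation path prescribed by plan `f` after history `h`. -/
def planPath (f : Hist Z → Profile Z) (h : Hist Z) : RPath Z :=
  fun n => f (planHist f h n)

/-- The position induced from `G` when coalition `C` deviates from path `x` in period `τ` via `ζ`. -/
def devHistory (G : Hist Z) (x : RPath Z) (C : Finset N) (τ : ℕ) (ζ : Profile Z) : Hist Z :=
  G ++ (List.ofFn fun t : Fin τ => x t) ++ [devProfile x C τ ζ]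

/-- A Perfect Coalitional Equilibrium: after every history, every one-shot coalitional deviation
leaves some member of the deviating coalition no better off, given the plan's continuation. -/
def IsPCE (u : N → Profile Z → ℝ) (δ : ℝ) (f : Hist Z → Profile Z) : Prop :=
  ∀ h : Hist Z, ∀ C : Finset N, C.Nonempty → ∀ τ : ℕ, ∀ ζ : Profile Z,
    ∃ i ∈ C, disc u δ i (planPath f h) ≥
      disc u δ i (splice (planPath f h) C τ ζ (planPath f (devHistory h (planPath f h) C τ ζ)))

/-- The set of Perfect Coalitional Equilibrium paths. -/
def PCEP (u : N → Profile Z → ℝ) (δ : ℝ) : Set (RPath Z) :=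
  {x | ∃ f : Hist Z → Profile Z, IsPCE u δ f ∧ planPath f [] = x}

/-- Payoff at position `G`: `u_i(G)(x) = a_i(G) + δ^{|G|} U_i(x)`. -/
noncomputable def posPayoff (u : N → Profile Z → ℝ) (δ : ℝ) (i : N) (G : Hist Z)
    (x : RPath Z) : ℝ :=
  (1 - δ) * (∑ t : Fin G.length, δ ^ (t : ℕ) * u i (G.get t)) + δ ^ G.length * disc u δ i x

/-- The conservative dominion of position `G` relative to the standard of behavior `σ`. -/
def CDOM (u : N → Profile Z → ℝ) (δ : ℝ) (σ : Hist Z → Set (RPath Z)) (G : Hist Z) :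
    Set (RPath Z) :=
  {x | ∃ C : Finset N, C.Nonempty ∧ ∃ τ : ℕ, ∃ ζ : Profile Z,
    (σ (devHistory G x C τ ζ)).Nonempty ∧
    ∀ y ∈ σ (devHistory G x C τ ζ), ∀ i ∈ C,
      posPayoff u δ i (devHistory G x C τ ζ) y > posPayoff u δ i G x}

/-- A standard of behavior is nondiscriminating if it assigns the same set to every position. -/
def Nondiscriminating (σ : Hist Z → Set (RPath Z)) : Prop := ∀ G H, σ G = σ H

/-- Conservative internal stability. -/
def ConsInternallyStable (u : N → Profile Z → ℝ) (δ : ℝ) (σ : Hist Z → Set (RPath Z)) : Prop :=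
  ∀ G, σ G ∩ CDOM u δ σ G = ∅

/-- Conservative external stability. -/
def ConsExternallyStable (u : N → Profile Z → ℝ) (δ : ℝ) (σ : Hist Z → Set (RPath Z)) : Prop :=
  ∀ G, (σ G)ᶜ ⊆ CDOM u δ σ G

end Setup

section Aux

variable {N : Type*} [Fintype N] [DecidableEq N] {Z : N → Type*}
  [∀ i, MetricSpace (Z i)] [∀ i, CompactSpace (Z i)] [∀ i, Nonempty (Z i)]

lemma summable_payoff (u : N → Profile Z → ℝ) {δ : ℝ} (hu : ∀ i, Continuous (u i))
    (hδ0 : 0 < δ) (hδ1 : δ < 1) (i : N) (x : RPath Z) :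
    Summable (fun t : ℕ => δ ^ t * u i (x t)) := by
  obtain ⟨M, hM⟩ := isCompact_univ.exists_bound_of_continuousOn (hu i).continuousOn
  apply Summable.of_norm_bounded (g := fun t => M * δ ^ t)
    ((summable_geometric_of_lt_one hδ0.le hδ1).mul_left M)
  intro t
  rw [norm_mul]
  calc ‖δ ^ t‖ * ‖u i (x t)‖ ≤ δ ^ t * M := by
        apply mul_le_mul _ (hM _ (mem_univ _)) (norm_nonneg _) (pow_nonneg hδ0.le t)
        rw [Real.norm_eq_abs, abs_pow, abs_of_pos hδ0]
    _ = M * δ ^ t := mul_comm _ _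

lemma disc_splice (u : N → Profile Z → ℝ) {δ : ℝ} (hu : ∀ i, Continuous (u i))
    (hδ0 : 0 < δ) (hδ1 : δ < 1) (i : N) (x : RPath Z) (C : Finset N) (τ : ℕ)
    (ζ : Profile Z) (y : RPath Z) :
    disc u δ i (splice x C τ ζ y) =
      (1 - δ) * ∑ t ∈ Finset.range (τ + 1), δ ^ t * u i (splice x C τ ζ y t)
        + δ ^ (τ + 1) * disc u δ i y := by
  have hs := summable_payoff u hu hδ0 hδ1 i (splice x C τ ζ y)
  unfold disc
  rw [← Summable.sum_add_tsum_nat_add (τ + 1) hs]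
  have key : ∀ t : ℕ, δ ^ (t + (τ + 1)) * u i (splice x C τ ζ y (t + (τ + 1)))
      = δ ^ (τ + 1) * (δ ^ t * u i (y t)) := by
    intro t
    have h1 : splice x C τ ζ y (t + (τ + 1)) = y t := by
      simp only [splice]
      rw [if_neg (show ¬ (t + (τ + 1) < τ) by omega),
        if_neg (show ¬ (t + (τ + 1) = τ) by omega)]
      have h2 : t + (τ + 1) - τ - 1 = t := by omega
      rw [h2]
    rw [h1, pow_add]; ring
  rw [tsum_congr key, tsum_mul_left]
  ring

lemma sum_hist_append (u : N → Profile Z → ℝ) (δ : ℝ) (i : N) (G L : Hist Z) :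
    ∑ t : Fin (G ++ L).length, δ ^ (t : ℕ) * u i ((G ++ L).get t)
      = ∑ t : Fin G.length, δ ^ (t : ℕ) * u i (G.get t)
        + δ ^ G.length * ∑ t : Fin L.length, δ ^ (t : ℕ) * u i (L.get t) := by
  have hlen : (G ++ L).length = G.length + L.length := List.length_append
  have h1 : ∑ t : Fin (G ++ L).length, δ ^ (t : ℕ) * u i ((G ++ L).get t)
      = ∑ t : Fin (G.length + L.length),
          δ ^ (t : ℕ) * u i ((G ++ L).get (Fin.cast hlen.symm t)) :=
    Fintype.sum_equiv (finCongr hlen) _ _ (fun t => by simp)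
  rw [h1, Fin.sum_univ_add]
  congr 1
  · apply Finset.sum_congr rfl
    intro t _
    have hg : (G ++ L).get (Fin.cast hlen.symm (Fin.castAdd L.length t)) = G.get t := by
      simp only [List.get_eq_getElem]
      exact List.getElem_append_left t.isLt
    rw [hg]
    rfl
  · rw [Finset.mul_sum]
    apply Finset.sum_congr rfl
    intro t _
    have h2 : ((G ++ L).get (Fin.cast hlen.symm (Fin.natAdd G.length t))) = L.get t := by
      simp only [List.get_eq_getElem, Fin.cast, Fin.natAdd]
      rw [List.getElem_append_right (by omega)]
      congr 1; omega
    rw [h2]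
    simp only [Fin.cast, Fin.natAdd, pow_add]
    ring

lemma posPayoff_devHistory (u : N → Profile Z → ℝ) {δ : ℝ} (hu : ∀ i, Continuous (u i))
    (hδ0 : 0 < δ) (hδ1 : δ < 1) (i : N) (G : Hist Z) (x : RPath Z) (C : Finset N)
    (τ : ℕ) (ζ : Profile Z) (y : RPath Z) :
    posPayoff u δ i (devHistory G x C τ ζ) y
      = (1 - δ) * ∑ t : Fin G.length, δ ^ (t : ℕ) * u i (G.get t)
        + δ ^ G.length * disc u δ i (splice x C τ ζ y) := by
  set L : Hist Z := (List.ofFn fun t : Fin τ => x t) ++ [devProfile x C τ ζ] with hL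
  have hLlen : L.length = τ + 1 := by simp [hL]
  have hdev : devHistory G x C τ ζ = G ++ L := by
    simp [devHistory, hL, List.append_assoc]
  have hSL : ∑ t : Fin L.length, δ ^ (t : ℕ) * u i (L.get t)
      = ∑ t ∈ Finset.range (τ + 1), δ ^ t * u i (splice x C τ ζ y t) := by
    rw [show (∑ t : Fin L.length, δ ^ (t : ℕ) * u i (L.get t))
        = ∑ t : Fin (τ + 1), δ ^ (t : ℕ) * u i (L.get (Fin.cast hLlen.symm t)) from
      Fintype.sum_equiv (finCongr hLlen) _ _ (fun t => by simp)]
    rw [← Fin.sum_univ_eq_sum_range]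
    apply Finset.sum_congr rfl
    intro t _
    have hget : L.get (Fin.cast hLlen.symm t) = splice x C τ ζ y t := by
      rcases Nat.lt_or_ge (t : ℕ) τ with h | h
      · have h1 : L.get (Fin.cast hLlen.symm t) = x t := by
          simp only [List.get_eq_getElem, hL, Fin.coe_cast]
          rw [List.getElem_append_left (by simpa using h)]
          simp
        rw [h1]
        simp only [splice]
        rw [if_pos h]
      · have heq : (t : ℕ) = τ := by omega
        have h1 : L.get (Fin.cast hLlen.symm t) = devProfile x C τ ζ := by
          simp only [List.get_eq_getElem, hL, Fin.coe_cast]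
          rw [List.getElem_append_right (by simpa using h)]
          simp
        rw [h1]
        simp only [splice]
        rw [if_neg (show ¬ ((t : ℕ) < τ) by omega), if_pos heq]
    rw [← hget]
  rw [hdev]
  unfold posPayoff
  rw [sum_hist_append, hSL, disc_splice u hu hδ0 hδ1,
    List.length_append, hLlen]
  rw [pow_add]
  ring

lemma planHist_shift (f : Hist Z → Profile Z) (h h' : Hist Z) (n : ℕ) :
    h ++ planHist (fun k => f (h ++ k)) h' n = planHist f (h ++ h') n := by
  induction n with
  | zero => rfl
  | succ n ih =>
    show h ++ (planHist (fun k => f (h ++ k)) h' n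
        ++ [f (h ++ planHist (fun k => f (h ++ k)) h' n)]) = _
    rw [← List.append_assoc, ih]
    rfl

lemma planPath_shift (f : Hist Z → Profile Z) (h h' : Hist Z) :
    planPath (fun k => f (h ++ k)) h' = planPath f (h ++ h') := by
  funext n
  show f (h ++ planHist (fun k => f (h ++ k)) h' n) = f (planHist f (h ++ h') n)
  rw [planHist_shift]

lemma planPath_mem_PCEP (u : N → Profile Z → ℝ) (δ : ℝ) (f : Hist Z → Profile Z)
    (hf : IsPCE u δ f) (h : Hist Z) : planPath f h ∈ PCEP u δ := by
  refine ⟨fun k => f (h ++ k), ?_, by rw [planPath_shift, List.append_nil]⟩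
  intro h' C hC τ ζ
  rw [planPath_shift]
  rw [planPath_shift]
  have hd : h ++ devHistory h' (planPath f (h ++ h')) C τ ζ
      = devHistory (h ++ h') (planPath f (h ++ h')) C τ ζ := by
    simp [devHistory, List.append_assoc]
  rw [hd]
  exact hf (h ++ h') C hC τ ζ

end Aux

theorem sigmaPC_internally_stable {N : Type*} [Fintype N] [DecidableEq N] {Z : N → Type*}
    [∀ i, MetricSpace (Z i)] [∀ i, CompactSpace (Z i)] [∀ i, Nonempty (Z i)]
    (u : N → Profile Z → ℝ) (δ : ℝ)
    (hu : ∀ i, Continuous (u i)) (hδ0 : 0 < δ) (hδ1 : δ < 1) :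
    ConsInternallyStable u δ (fun _ : Hist Z => PCEP u δ) := by
  intro G
  rw [Set.eq_empty_iff_forall_notMem]
  rintro x ⟨⟨f, hf, hfx⟩, C, hC, τ, ζ, -, hdom⟩
  set y := planPath f (devHistory [] x C τ ζ) with hy
  have hyP : y ∈ PCEP u δ := planPath_mem_PCEP u δ f hf _
  obtain ⟨i, hiC, hge⟩ := hf [] C hC τ ζ
  rw [hfx] at hge
  have hlt := hdom y hyP i hiC
  rw [posPayoff_devHistory u hu hδ0 hδ1] at hlt
  unfold posPayoff at hlt
  have hp : (0 : ℝ) < δ ^ G.length := pow_pos hδ0 _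
  have h2 : δ ^ G.length * disc u δ i x
      < δ ^ G.length * disc u δ i (splice x C τ ζ y) := by linarith
  exact ((mul_lt_mul_iff_right₀ hp).mp h2).not_ge hge
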